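/- For every finite simple graph G on n ≥ 2 vertices, the number of spanning trees satisfies τ(G) ≤ det(Δ)^{1 − 1/n}, where Δ is the diagonal degree matrix of G and the exponent is a real power. -/

import Mathlib

open Matrix
open scoped Classical

/-- Adjacency matrix of a simple graph, as a real matrix. -/
noncomputable def adjMat {n : ℕ} (G : SimpleGraph (Fin n)) : Matrix (Fin n) (Fin n) ℝ :=
  Matrix.of fun i j => if G.Adj i j then (1 : ℝ) else 0

/-- Diagonal degree matrix of a simple graph. -/
noncomputable def degMat {n : ℕ} (G : SimpleGraph (Fin n)) : Matrix (Fin n) (Fin n) ℝ :=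
  Matrix.diagonal fun i => (Nat.card (G.neighborSet i) : ℝ)

/-- Combinatorial Laplacian. -/
noncomputable def lapMat {n : ℕ} (G : SimpleGraph (Fin n)) : Matrix (Fin n) (Fin n) ℝ :=
  degMat G - adjMat G

/-- Number of spanning trees of `G`: spanning subgraphs of `G` that are trees. -/
noncomputable def numSpanningTrees {n : ℕ} (G : SimpleGraph (Fin n)) : ℕ :=
  Nat.card {H : SimpleGraph (Fin n) // H ≤ G ∧ H.IsTree}

/-- Matrix logarithm via functional calculus (log of eigenvalues), with log 0 = 0. -/
noncomputable def matLog {n : ℕ} (M : Matrix (Fin n) (Fin n) ℝ) : Matrix (Fin n) (Fin n) ℝ :=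
  if hM : M.IsHermitian then
    (hM.eigenvectorUnitary : Matrix (Fin n) (Fin n) ℝ) *
      Matrix.diagonal (fun i => Real.log (hM.eigenvalues i)) *
      star (hM.eigenvectorUnitary : Matrix (Fin n) (Fin n) ℝ)
  else 0

/-- Quantum relative entropy S(σ₁‖σ₂) = Tr(σ₁ log σ₁) − Tr(σ₁ log σ₂). -/
noncomputable def qRelEntropy {n : ℕ} (σ1 σ2 : Matrix (Fin n) (Fin n) ℝ) : ℝ :=
  (σ1 * matLog σ1).trace - (σ1 * matLog σ2).trace

/-- Projection Π_ℓ = I − E_ℓℓ. -/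
noncomputable def projP {n : ℕ} (ℓ : Fin n) : Matrix (Fin n) (Fin n) ℝ :=
  1 - Matrix.single ℓ ℓ 1

/-- Q_ℓ = E_ℓℓ. -/
noncomputable def projQ {n : ℕ} (ℓ : Fin n) : Matrix (Fin n) (Fin n) ℝ :=
  Matrix.single ℓ ℓ 1

/-- Pinching map Φ_ℓ. -/
noncomputable def pinch {n : ℕ} (ℓ : Fin n) (M : Matrix (Fin n) (Fin n) ℝ) :
    Matrix (Fin n) (Fin n) ℝ :=
  projP ℓ * M * projP ℓ + projQ ℓ * M * projQ ℓ

/-- Maximum degree. -/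
noncomputable def maxDeg {n : ℕ} (G : SimpleGraph (Fin n)) : ℕ :=
  Finset.univ.sup fun i => Nat.card (G.neighborSet i)

open SimpleGraph

section Aux
namespace TreeBound

variable {n : ℕ}

/-- The unique path in a tree from `i` to `ℓ`. -/
noncomputable def treePath {H : SimpleGraph (Fin n)} (hH : H.IsTree) (ℓ i : Fin n) :
    H.Walk i ℓ :=
  (hH.existsUnique_path i ℓ).exists.choose

lemma treePath_isPath {H : SimpleGraph (Fin n)} (hH : H.IsTree) (ℓ i : Fin n) :
    (treePath hH ℓ i).IsPath :=
  (hH.existsUnique_path i ℓ).exists.choose_spec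

lemma treePath_unique {H : SimpleGraph (Fin n)} (hH : H.IsTree) {ℓ i : Fin n}
    (q : H.Walk i ℓ) (hq : q.IsPath) : q = treePath hH ℓ i :=
  (hH.existsUnique_path i ℓ).unique hq (treePath_isPath hH ℓ i)

/-- The parent of `i` in the tree `H` rooted at `ℓ`. -/
noncomputable def treeParent {H : SimpleGraph (Fin n)} (hH : H.IsTree) (ℓ i : Fin n) : Fin n :=
  (treePath hH ℓ i).getVert 1

lemma treePath_length_pos {H : SimpleGraph (Fin n)} (hH : H.IsTree) {ℓ i : Fin n}
    (hi : i ≠ ℓ) : 0 < (treePath hH ℓ i).length := by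
  rcases Nat.eq_zero_or_pos (treePath hH ℓ i).length with h | h
  · exfalso
    apply hi
    have h2 := (treePath hH ℓ i).getVert_length
    rw [h, Walk.getVert_zero] at h2
    exact h2
  · exact h

lemma treeParent_adj {H : SimpleGraph (Fin n)} (hH : H.IsTree) {ℓ i : Fin n}
    (hi : i ≠ ℓ) : H.Adj i (treeParent hH ℓ i) := by
  have := (treePath hH ℓ i).adj_getVert_succ (treePath_length_pos hH hi)
  rwa [Walk.getVert_zero] at this

lemma adj_parent_or {H : SimpleGraph (Fin n)} (hH : H.IsTree) {ℓ u v : Fin n}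
    (h : H.Adj u v) :
    (u ≠ ℓ ∧ treeParent hH ℓ u = v) ∨ (v ≠ ℓ ∧ treeParent hH ℓ v = u) := by
  by_cases hv : v = ℓ
  · subst hv
    left
    have hne : u ≠ v := h.ne  -- not used directly
    refine ⟨h.ne, ?_⟩
    have hpath : (Walk.cons h Walk.nil).IsPath := by
      rw [Walk.cons_isPath_iff]
      simp [h.ne]
    have := treePath_unique hH (Walk.cons h Walk.nil) hpath
    rw [treeParent, ← this]
    simp [Walk.getVert_cons_succ]
  · set q := treePath hH ℓ v with hqdef
    by_cases hu : u ∈ q.support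
    · right
      refine ⟨hv, ?_⟩
      have ht : (q.takeUntil u hu).IsPath := (treePath_isPath hH ℓ v).takeUntil hu
      have hcons : (Walk.cons h.symm Walk.nil : H.Walk v u).IsPath := by
        rw [Walk.cons_isPath_iff]
        simp [h.ne']
      have heq : q.takeUntil u hu = Walk.cons h.symm Walk.nil :=
        (hH.existsUnique_path v u).unique ht hcons
      have hspec := q.take_spec hu
      rw [heq] at hspec
      rw [treeParent, ← hqdef, ← hspec]
      simp [Walk.getVert_cons_succ]
    · left
      have huℓ : u ≠ ℓ := by
        intro hul
        subst hul
        exact hu q.end_mem_support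
      refine ⟨huℓ, ?_⟩
      have hpath : (Walk.cons h q).IsPath := by
        rw [Walk.cons_isPath_iff]
        exact ⟨treePath_isPath hH ℓ v, hu⟩
      have := treePath_unique hH (Walk.cons h q) hpath
      rw [treeParent, ← this]
      simp [Walk.getVert_cons_succ]

lemma tree_eq_of_parent_eq {H1 H2 : SimpleGraph (Fin n)} (h1 : H1.IsTree) (h2 : H2.IsTree)
    {ℓ : Fin n} (hp : ∀ i, i ≠ ℓ → treeParent h1 ℓ i = treeParent h2 ℓ i) : H1 = H2 := by
  have key : ∀ (H1 H2 : SimpleGraph (Fin n)) (h1 : H1.IsTree) (h2 : H2.IsTree),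
      (∀ i, i ≠ ℓ → treeParent h1 ℓ i = treeParent h2 ℓ i) →
      ∀ u v, H1.Adj u v → H2.Adj u v := by
    intro H1 H2 h1 h2 hp u v huv
    rcases adj_parent_or h1 (ℓ := ℓ) huv with ⟨hne, hpar⟩ | ⟨hne, hpar⟩
    · rw [hp u hne] at hpar
      rw [← hpar]
      exact treeParent_adj h2 hne
    · rw [hp v hne] at hpar
      rw [← hpar]
      exact (treeParent_adj h2 hne).symm
  ext u v
  exact ⟨key H1 H2 h1 h2 hp u v, key H2 H1 h2 h1 (fun i hi => (hp i hi).symm) u v⟩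

end TreeBound
end Aux


open TreeBound in
lemma card_spanning_trees_le {n : ℕ} (G : SimpleGraph (Fin n)) (ℓ : Fin n) :
    numSpanningTrees G ≤ ∏ i ∈ Finset.univ.erase ℓ, Nat.card (G.neighborSet i) := by
  classical
  have hinj : Function.Injective
      (fun (H : {H : SimpleGraph (Fin n) // H ≤ G ∧ H.IsTree}) =>
        (fun i : {i : Fin n // i ≠ ℓ} =>
          (⟨treeParent H.2.2 ℓ i.1, H.2.1 (treeParent_adj H.2.2 i.2)⟩ :
            G.neighborSet i.1))) := by
    intro H1 H2 hEq
    apply Subtype.ext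
    apply tree_eq_of_parent_eq H1.2.2 H2.2.2
    intro i hi
    exact Subtype.ext_iff.mp (congrFun hEq ⟨i, hi⟩)
  have h1 := Nat.card_le_card_of_injective _ hinj
  calc numSpanningTrees G ≤ Nat.card (∀ i : {i : Fin n // i ≠ ℓ}, G.neighborSet i.1) := h1
    _ = ∏ i : {i : Fin n // i ≠ ℓ}, Nat.card (G.neighborSet i.1) := Nat.card_pi
    _ = ∏ i ∈ Finset.univ.erase ℓ, Nat.card (G.neighborSet i) := by
        rw [Finset.prod_subtype (Finset.univ.erase ℓ)
          (p := fun i : Fin n => i ≠ ℓ) (fun x => by simp)]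

lemma degree_pos_of_tree {n : ℕ} (hn : 2 ≤ n) {G H : SimpleGraph (Fin n)}
    (hle : H ≤ G) (hH : H.IsTree) (i : Fin n) : 0 < Nat.card (G.neighborSet i) := by
  have : Nontrivial (Fin n) := ⟨⟨⟨0, by omega⟩, ⟨1, by omega⟩, by simp [Fin.ext_iff]⟩⟩
  obtain ⟨k, hk⟩ := exists_ne i
  obtain ⟨w⟩ := hH.isConnected.preconnected i k
  have hlen : 0 < w.length := by
    rcases Nat.eq_zero_or_pos w.length with h | h
    · exfalso
      apply hk
      have h2 := w.getVert_length
      rw [h, Walk.getVert_zero] at h2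
      exact h2.symm
    · exact h
  have hadj : G.Adj i (w.getVert 1) := by
    have := w.adj_getVert_succ hlen
    rw [Walk.getVert_zero] at this
    exact hle this
  have : Nonempty (G.neighborSet i) := ⟨⟨w.getVert 1, hadj⟩⟩
  exact Nat.card_pos


/-- τ(G) ≤ det(Δ)^{1 − 1/n}. -/
theorem numSpanningTrees_le_detDeg_rpow (n : ℕ) (hn : 2 ≤ n)
    (G : SimpleGraph (Fin n)) :
    (numSpanningTrees G : ℝ) ≤ (degMat G).det ^ (1 - 1 / (n : ℝ)) := by
  classical
  set D : Fin n → ℕ := fun i => Nat.card (G.neighborSet i) with hD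
  set P : ℕ := ∏ i, D i with hPdef
  have hdet : (degMat G).det = (P : ℝ) := by
    rw [degMat, Matrix.det_diagonal, hPdef]
    push_cast
    rfl
  rcases eq_or_ne (numSpanningTrees G) 0 with hT | hT
  · rw [hT, hdet]
    exact_mod_cast Real.rpow_nonneg (by positivity) _
  · set T : ℕ := numSpanningTrees G with hTdef
    have hne : Nonempty {H : SimpleGraph (Fin n) // H ≤ G ∧ H.IsTree} :=
      (Nat.card_ne_zero.mp hT).1
    obtain ⟨H, hle, htree⟩ := hne
    have hDpos : ∀ i, 0 < D i := fun i => degree_pos_of_tree hn hle htree i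
    have hP : 0 < P := Finset.prod_pos fun i _ => hDpos i
    have hkey : ∀ ℓ : Fin n, T ≤ ∏ i ∈ Finset.univ.erase ℓ, D i :=
      fun ℓ => card_spanning_trees_le G ℓ
    have hmul : T ^ n * P ≤ P ^ n := by
      calc T ^ n * P = ∏ ℓ : Fin n, (T * D ℓ) := by
            rw [Finset.prod_mul_distrib, Finset.prod_const, Finset.card_univ,
              Fintype.card_fin, hPdef]
        _ ≤ ∏ ℓ : Fin n, ((∏ i ∈ Finset.univ.erase ℓ, D i) * D ℓ) :=
            Finset.prod_le_prod' fun ℓ _ => Nat.mul_le_mul_right _ (hkey ℓ)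
        _ = ∏ _ℓ : Fin n, P := Finset.prod_congr rfl fun ℓ _ => by
            rw [Finset.prod_erase_mul _ _ (Finset.mem_univ ℓ), hPdef]
        _ = P ^ n := by rw [Finset.prod_const, Finset.card_univ, Fintype.card_fin]
    have hTn : T ^ n ≤ P ^ (n - 1) := by
      apply Nat.le_of_mul_le_mul_right _ hP
      calc T ^ n * P ≤ P ^ n := hmul
        _ = P ^ (n - 1) * P := by
            rw [← pow_succ, Nat.sub_add_cancel (by omega)]
    have hR : (T : ℝ) ^ (n : ℕ) ≤ (P : ℝ) ^ (n - 1 : ℕ) := by exact_mod_cast hTn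
    have hn0 : (n : ℝ) ≠ 0 := by positivity
    have hTnn : (0 : ℝ) ≤ (T : ℝ) := by positivity
    have hPnn : (0 : ℝ) ≤ (P : ℝ) := by positivity
    have e1 : ((T : ℝ) ^ (n : ℕ)) ^ (1 / (n : ℝ)) ≤ ((P : ℝ) ^ (n - 1 : ℕ)) ^ (1 / (n : ℝ)) :=
      Real.rpow_le_rpow (by positivity) hR (by positivity)
    have eL : ((T : ℝ) ^ (n : ℕ)) ^ (1 / (n : ℝ)) = (T : ℝ) := by
      rw [← Real.rpow_natCast (T : ℝ) n, ← Real.rpow_mul hTnn,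
        mul_one_div, div_self hn0, Real.rpow_one]
    have eR : ((P : ℝ) ^ (n - 1 : ℕ)) ^ (1 / (n : ℝ)) = (P : ℝ) ^ (1 - 1 / (n : ℝ)) := by
      rw [← Real.rpow_natCast (P : ℝ) (n - 1), ← Real.rpow_mul hPnn]
      congr 1
      rw [Nat.cast_sub (by omega), Nat.cast_one]
      field_simp
    rw [eL, eR] at e1
    rw [hdet]
    exact e1
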